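/- Let Λ, t, m, d, k be positive integers and v_1,…,v_t ∈ ℤ^d with entries bounded by k in absolute value. Suppose that for each coordinate j there is an integer interval I_j containing at most L integer points such that at least (3/4)(Λ+1)^t of the vectors λ ∈ {0,…,Λ}^t satisfy (Σ λ_i v_i)_j ∈ I_j, and suppose d·((9/16)(Λ+1)^{2t}/L − (Λ+1)^t) ≥ m·(Λ+1)^{2t}. Then there exist λ ≠ λ' in {0,…,Λ}^t such that Σ λ_i v_i and Σ λ'_i v_i agree on at least m coordinates. -/

import Mathlib

open Finset

set_option maxHeartbeats 1000000 in
theorem stmt_19 (t d m Λ k L : ℕ) (ht : 1 ≤ t) (hm : 1 ≤ m) (hΛ : 1 ≤ Λ) (hk : 1 ≤ k)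
    (v : Fin t → Fin d → ℤ) (hv : ∀ i j, |v i j| ≤ (k : ℤ))
    (hI : ∀ j : Fin d, ∃ a b : ℤ, (Finset.Icc a b).card ≤ L ∧
      (3 / 4 : ℝ) * ((Λ + 1 : ℝ)) ^ t ≤
        ((Finset.univ.filter (fun lam : Fin t → Fin (Λ + 1) =>
          ∑ i, (lam i : ℤ) * v i j ∈ Finset.Icc a b)).card : ℝ))
    (hcount : (m : ℝ) * ((Λ + 1 : ℝ)) ^ (2 * t) ≤
      (d : ℝ) * ((9 / 16 : ℝ) * ((Λ + 1 : ℝ)) ^ (2 * t) / (L : ℝ) - ((Λ + 1 : ℝ)) ^ t)) :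
    ∃ lam lam' : Fin t → Fin (Λ + 1), lam ≠ lam' ∧
      m ≤ (Finset.univ.filter (fun j : Fin d =>
        ∑ i, (lam i : ℤ) * v i j = ∑ i, (lam' i : ℤ) * v i j)).card := by
  classical
  set S : Fin d → (Fin t → Fin (Λ + 1)) → ℤ :=
    fun j lam => ∑ i, (lam i : ℤ) * v i j with hSdef
  set N : ℕ := (Λ + 1) ^ t with hNdef
  have hNcard : Fintype.card (Fin t → Fin (Λ + 1)) = N := by
    simp [hNdef, Fintype.card_fun]
  have hNR : ((N : ℝ)) = ((Λ + 1 : ℝ)) ^ t := by push_cast [hNdef]; ring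
  have hN2R : ((Λ + 1 : ℝ)) ^ (2 * t) = (N : ℝ) ^ 2 := by
    rw [hNR, ← pow_mul, mul_comm]
  have hNpos : (0 : ℝ) < (N : ℝ) := by
    rw [hNR]; positivity
  have hmR : (1 : ℝ) ≤ (m : ℝ) := by exact_mod_cast hm
  have hdR : (0 : ℝ) ≤ (d : ℝ) := Nat.cast_nonneg d
  rw [hN2R] at hcount
  -- L ≥ 1
  have hL : 1 ≤ L := by
    by_contra h
    push_neg at h
    interval_cases L
    rw [Nat.cast_zero, div_zero] at hcount
    nlinarith [mul_nonneg hdR hNpos.le, mul_pos hNpos hNpos, hmR]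
  have hLR : (0 : ℝ) < (L : ℝ) := by exact_mod_cast hL
  -- per coordinate bound
  have key : ∀ j : Fin d, (9 / 16 : ℝ) * (N : ℝ) ^ 2 / (L : ℝ) ≤
      ((univ.filter (fun p : (Fin t → Fin (Λ + 1)) × (Fin t → Fin (Λ + 1)) =>
        S j p.1 = S j p.2)).card : ℝ) := by
    intro j
    obtain ⟨a, b, hab, hfrac⟩ := hI j
    set I : Finset ℤ := Finset.Icc a b with hIdef
    set h : ℤ → ℕ := fun s => (univ.filter (fun lam => S j lam = s)).card with hhdef
    set P := univ.filter (fun p : (Fin t → Fin (Λ + 1)) × (Fin t → Fin (Λ + 1)) =>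
        S j p.1 = S j p.2) with hPdef
    -- step 1 : 3/4 N ≤ ∑_{s∈I} h s
    have step1 : (3 / 4 : ℝ) * (N : ℝ) ≤ ∑ s ∈ I, ((h s : ℝ)) := by
      have hcard : (univ.filter (fun lam : Fin t → Fin (Λ + 1) => S j lam ∈ I)).card
          ≤ ∑ s ∈ I, h s := by
        rw [Finset.card_eq_sum_card_fiberwise
          (s := univ.filter (fun lam : Fin t → Fin (Λ + 1) => S j lam ∈ I)) (f := S j) (t := I) (fun x hx => (Finset.mem_filter.mp hx).2)]
        refine Finset.sum_le_sum fun s _ => ?_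
        refine Finset.card_le_card fun x hx => ?_
        simp only [Finset.mem_filter] at hx ⊢
        exact ⟨Finset.mem_univ x, hx.2⟩
      have : (3 / 4 : ℝ) * (N : ℝ) ≤
          ((univ.filter (fun lam : Fin t → Fin (Λ + 1) => S j lam ∈ I)).card : ℝ) := by
        rw [hNR]; exact hfrac
      calc (3 / 4 : ℝ) * (N : ℝ)
          ≤ ((univ.filter (fun lam : Fin t → Fin (Λ + 1) => S j lam ∈ I)).card : ℝ) := this
        _ ≤ ∑ s ∈ I, ((h s : ℝ)) := by exact_mod_cast Nat.cast_le.mpr (by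
              calc _ ≤ ∑ s ∈ I, h s := hcard)
    -- step 2 : ∑_{s∈I} (h s)^2 ≤ P.card
    have step2 : ∑ s ∈ I, (h s) ^ 2 ≤ P.card := by
      set B : ℤ → Finset ((Fin t → Fin (Λ + 1)) × (Fin t → Fin (Λ + 1))) :=
        fun s => (univ.filter (fun lam => S j lam = s)) ×ˢ
                 (univ.filter (fun lam => S j lam = s)) with hBdef
      have hBcard : ∀ s, (B s).card = (h s) ^ 2 := by
        intro s; simp [hBdef, Finset.card_product, hhdef, sq]
      have hdisj : Set.PairwiseDisjoint (I : Set ℤ) B := by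
        intro s _ s' _ hne
        simp only [Finset.disjoint_left, hBdef]
        intro p hp hp'
        simp only [Finset.mem_product, Finset.mem_filter] at hp hp'
        exact hne (hp.1.2 ▸ hp'.1.2.symm ▸ rfl)
      have hsub : I.biUnion B ⊆ P := by
        intro p hp
        simp only [Finset.mem_biUnion, hBdef, Finset.mem_product, Finset.mem_filter] at hp
        obtain ⟨s, _, ⟨_, h1⟩, ⟨_, h2⟩⟩ := hp
        simp only [hPdef, Finset.mem_filter]
        exact ⟨Finset.mem_univ p, h1.trans h2.symm⟩
      calc ∑ s ∈ I, (h s) ^ 2 = ∑ s ∈ I, (B s).card := by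
              simp_rw [hBcard]
        _ = (I.biUnion B).card := (Finset.card_biUnion (fun s hs s' hs' hne =>
              hdisj hs hs' hne)).symm
        _ ≤ P.card := Finset.card_le_card hsub
    -- Cauchy-Schwarz
    have cs : (∑ s ∈ I, ((h s : ℝ))) ^ 2 ≤ (I.card : ℝ) * ∑ s ∈ I, ((h s : ℝ)) ^ 2 :=
      sq_sum_le_card_mul_sum_sq
    have step2R : ∑ s ∈ I, ((h s : ℝ)) ^ 2 ≤ (P.card : ℝ) := by
      exact_mod_cast step2
    have hIcard : (I.card : ℝ) ≤ (L : ℝ) := by exact_mod_cast hab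
    have hsumnn : (0 : ℝ) ≤ ∑ s ∈ I, ((h s : ℝ)) ^ 2 := Finset.sum_nonneg fun s _ => sq_nonneg _
    have h1 : ((3 / 4 : ℝ) * (N : ℝ)) ^ 2 ≤ (L : ℝ) * (P.card : ℝ) := by
      calc ((3 / 4 : ℝ) * (N : ℝ)) ^ 2 ≤ (∑ s ∈ I, ((h s : ℝ))) ^ 2 :=
            pow_le_pow_left₀ (by positivity) step1 2
        _ ≤ (I.card : ℝ) * ∑ s ∈ I, ((h s : ℝ)) ^ 2 := cs
        _ ≤ (L : ℝ) * ∑ s ∈ I, ((h s : ℝ)) ^ 2 :=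
            mul_le_mul_of_nonneg_right hIcard hsumnn
        _ ≤ (L : ℝ) * (P.card : ℝ) := mul_le_mul_of_nonneg_left step2R hLR.le
    rw [div_le_iff₀ hLR]
    nlinarith [h1]
  -- global counting
  set agree : (Fin t → Fin (Λ + 1)) × (Fin t → Fin (Λ + 1)) → ℕ :=
    fun p => (univ.filter (fun j : Fin d => S j p.1 = S j p.2)).card with hagdef
  have swap : ∑ j : Fin d, (univ.filter (fun p : (Fin t → Fin (Λ + 1)) × (Fin t → Fin (Λ + 1)) =>
      S j p.1 = S j p.2)).card = ∑ p : (Fin t → Fin (Λ + 1)) × (Fin t → Fin (Λ + 1)), agree p := by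
    simp_rw [hagdef, Finset.card_filter]
    exact Finset.sum_comm
  have total : (m : ℝ) * (N : ℝ) ^ 2 + (d : ℝ) * (N : ℝ) ≤
      ∑ p : (Fin t → Fin (Λ + 1)) × (Fin t → Fin (Λ + 1)), ((agree p : ℝ)) := by
    have h1 : (d : ℝ) * ((9 / 16 : ℝ) * (N : ℝ) ^ 2 / (L : ℝ)) ≤
        ∑ j : Fin d, ((univ.filter (fun p : (Fin t → Fin (Λ + 1)) × (Fin t → Fin (Λ + 1)) =>
          S j p.1 = S j p.2)).card : ℝ) := by
      calc (d : ℝ) * ((9 / 16 : ℝ) * (N : ℝ) ^ 2 / (L : ℝ))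
          = ∑ _j : Fin d, ((9 / 16 : ℝ) * (N : ℝ) ^ 2 / (L : ℝ)) := by
            rw [Finset.sum_const, Finset.card_univ, Fintype.card_fin, nsmul_eq_mul]
        _ ≤ _ := Finset.sum_le_sum fun j _ => key j
    have h2 : (∑ p : (Fin t → Fin (Λ + 1)) × (Fin t → Fin (Λ + 1)), ((agree p : ℝ))) =
        ∑ j : Fin d, ((univ.filter (fun p : (Fin t → Fin (Λ + 1)) × (Fin t → Fin (Λ + 1)) =>
          S j p.1 = S j p.2)).card : ℝ) := by
      rw [← Nat.cast_sum, ← Nat.cast_sum, swap]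
    rw [h2]
    have : (m : ℝ) * (N : ℝ) ^ 2 + (d : ℝ) * (N : ℝ) ≤
        (d : ℝ) * ((9 / 16 : ℝ) * (N : ℝ) ^ 2 / (L : ℝ)) := by
      rw [← hNR] at hcount
      rw [mul_sub] at hcount
      rw [mul_div_assoc] at hcount ⊢
      linarith [hcount]
    linarith
  -- split off diagonal
  set U : Finset ((Fin t → Fin (Λ + 1)) × (Fin t → Fin (Λ + 1))) := univ with hUdef
  have hsplit : ∑ p ∈ U.filter (fun p => p.1 = p.2), agree p +
      ∑ p ∈ U.filter (fun p => ¬ p.1 = p.2), agree p = ∑ p ∈ U, agree p :=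
    Finset.sum_filter_add_sum_filter_not U _ agree
  have hdiagcard : (U.filter (fun p => p.1 = p.2)).card = N := by
    have : U.filter (fun p => p.1 = p.2) = Finset.diag (univ : Finset (Fin t → Fin (Λ + 1))) := by
      ext p
      simp [Finset.mem_diag, hUdef]
    rw [this, Finset.diag_card, Finset.card_univ, hNcard]
  have hdiag : ∑ p ∈ U.filter (fun p => p.1 = p.2), agree p ≤ N * d := by
    calc ∑ p ∈ U.filter (fun p => p.1 = p.2), agree p
        ≤ ∑ _p ∈ U.filter (fun p => p.1 = p.2), d := by
          refine Finset.sum_le_sum fun p _ => ?_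
          simpa [hagdef] using (Finset.card_filter_le univ
            (fun j : Fin d => S j p.1 = S j p.2)).trans_eq (by simp)
      _ = N * d := by rw [Finset.sum_const, hdiagcard, smul_eq_mul]
  have hoff : (m : ℝ) * (N : ℝ) ^ 2 ≤
      ∑ p ∈ U.filter (fun p => ¬ p.1 = p.2), ((agree p : ℝ)) := by
    have h1 : (∑ p ∈ U.filter (fun p => p.1 = p.2), ((agree p : ℝ))) +
        ∑ p ∈ U.filter (fun p => ¬ p.1 = p.2), ((agree p : ℝ)) =
        ∑ p ∈ U, ((agree p : ℝ)) := by
      exact_mod_cast congrArg (Nat.cast : ℕ → ℝ) hsplit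
    have h2 : (∑ p ∈ U.filter (fun p => p.1 = p.2), ((agree p : ℝ))) ≤ (N : ℝ) * (d : ℝ) := by
      exact_mod_cast Nat.cast_le.mpr hdiag
    have h3 : ∑ p ∈ U, ((agree p : ℝ)) =
        ∑ p : (Fin t → Fin (Λ + 1)) × (Fin t → Fin (Λ + 1)), ((agree p : ℝ)) := rfl
    rw [h3] at h1
    linarith [total]
  -- pigeonhole
  have hoffcard : ((U.filter (fun p => ¬ p.1 = p.2)).card : ℝ) = (N : ℝ) ^ 2 - (N : ℝ) := by
    have hc : (U.filter (fun p => p.1 = p.2)).card +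
        (U.filter (fun p => ¬ p.1 = p.2)).card = U.card :=
      Finset.card_filter_add_card_filter_not _
    have hU : U.card = N ^ 2 := by
      rw [hUdef, Finset.card_univ, Fintype.card_prod, hNcard, sq]
    have := congrArg (Nat.cast : ℕ → ℝ) hc
    push_cast at this
    rw [hdiagcard] at hc
    have : ((U.filter (fun p => ¬ p.1 = p.2)).card : ℝ) + (N : ℝ) = (N : ℝ) ^ 2 := by
      exact_mod_cast by omega
    linarith
  have hlt : ∑ p ∈ U.filter (fun p => ¬ p.1 = p.2), ((m : ℝ) - 1) <
      ∑ p ∈ U.filter (fun p => ¬ p.1 = p.2), ((agree p : ℝ)) := by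
    rw [Finset.sum_const, nsmul_eq_mul, hoffcard]
    nlinarith [hoff, hNpos, hmR, mul_nonneg (sub_nonneg.mpr hmR) hNpos.le, mul_pos hNpos hNpos]
  obtain ⟨p, hp, hlt'⟩ := Finset.exists_lt_of_sum_lt hlt
  simp only [hUdef, Finset.mem_filter, Finset.mem_univ, true_and] at hp
  refine ⟨p.1, p.2, hp, ?_⟩
  have : (m : ℝ) < (agree p : ℝ) + 1 := by linarith
  have hfin : m < agree p + 1 := by exact_mod_cast this
  have : m ≤ agree p := by omega
  simpa [hagdef, hSdef] using this
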